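/- In a two-block layout with three cross-aisle vertices a_j, b_j, c_j per aisle j (top, middle, bottom), suppose a_j and c_j are connected in a subgraph T using only edges in columns 0..j. Then at least one of the following holds: (i) a_j and c_j are connected via a path entirely through columns 0..j−1 together with horizontal edges at both a and c between columns j−1 and j; (ii) a_j and b_j are connected in columns 0..j and b_j and c_j are connected in columns 0..j. -/

import Mathlib

/-- One step of movement in (the subgraph `T` of) the two-block warehouse graph,
restricted to aisle columns `0..J`.  Vertices are pairs `(j, s)` with `s : Fin 3`
(`0` = top vertex `a_j`, `1` = middle vertex `b_j`, `2` = bottom vertex `c_j`).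
`pab j` (resp. `pbc j`) says `T` contains the full vertical subaisle traversal joining
`a_j` to `b_j` (resp. `b_j` to `c_j`); `H s j` says `T` contains a horizontal edge in
cross-aisle `s` between columns `j` and `j+1`. -/
def TwoBlockStep (pab pbc : ℕ → Prop) (H : Fin 3 → ℕ → Prop) (J : ℕ) :
    ℕ × Fin 3 → ℕ × Fin 3 → Prop := fun u v =>
  u.1 ≤ J ∧ v.1 ≤ J ∧
    ((u.1 = v.1 ∧
        ((pab u.1 ∧ ((u.2 = 0 ∧ v.2 = 1) ∨ (u.2 = 1 ∧ v.2 = 0))) ∨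
         (pbc u.1 ∧ ((u.2 = 1 ∧ v.2 = 2) ∨ (u.2 = 2 ∧ v.2 = 1))))) ∨
     (u.2 = v.2 ∧
        ((v.1 = u.1 + 1 ∧ H u.2 u.1) ∨ (u.1 = v.1 + 1 ∧ H u.2 v.1))))

private lemma avoid_endpoint {α} {r : α → α → Prop} {a b c : α}
    (h : Relation.ReflTransGen (fun u v => r u v ∧ u ≠ c ∧ v ≠ c) a b) (ha : a ≠ c) :
    b ≠ c := by
  induction h with
  | refl => exact ha
  | tail _ hstep _ => exact hstep.2.2

private lemma split_or_avoid {α} {r : α → α → Prop} {a b x : α}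
    (h : Relation.ReflTransGen r a b) (ha : a ≠ x) :
    (Relation.ReflTransGen (fun u v => r u v ∧ u ≠ x ∧ v ≠ x) a b) ∨
    (Relation.ReflTransGen r a x ∧ Relation.ReflTransGen r x b) := by
  induction h with
  | @tail b' b'' hab hstep ih =>
    rcases ih with hp | ⟨h1, h2⟩
    · by_cases hb : b'' = x
      · subst hb
        exact Or.inr ⟨(Relation.ReflTransGen.mono (p := r) (fun u v (h : r u v ∧ _) => h.1) _ _ hp).tail hstep, .refl⟩
      · exact Or.inl (hp.tail ⟨hstep, avoid_endpoint hp ha, hb⟩)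
    · exact Or.inr ⟨h1, h2.tail hstep⟩
  | refl => exact Or.inl .refl


/-- Boundary-vertex connection disjunction for the two-block EC formulation: if the
top boundary vertex `a_j` and the bottom boundary vertex `c_j` are connected in the
subgraph using only columns `0..j`, then either (i) they are connected through the
previous aisle, i.e. `a_{j-1}` and `c_{j-1}` are connected in columns `0..j−1` and
both boundary cross-aisles carry a horizontal edge between columns `j−1` and `j`,
or (ii) `a_j` is connected to the middle vertex `b_j` and `b_j` is connected to `c_j`,
all within columns `0..j`. -/
theorem twoblock_boundary_connection_disjunction
    (m j : ℕ) (hj : j < m) (pab pbc : ℕ → Prop) (H : Fin 3 → ℕ → Prop)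
    (hconn : Relation.ReflTransGen (TwoBlockStep pab pbc H j) (j, 0) (j, 2)) :
    (0 < j ∧
      Relation.ReflTransGen (TwoBlockStep pab pbc H (j - 1)) (j - 1, 0) (j - 1, 2) ∧
      H 0 (j - 1) ∧ H 2 (j - 1)) ∨
    (Relation.ReflTransGen (TwoBlockStep pab pbc H j) (j, 0) (j, 1) ∧
      Relation.ReflTransGen (TwoBlockStep pab pbc H j) (j, 1) (j, 2)) := by
  have h01 : ((j, 0) : ℕ × Fin 3) ≠ (j, 1) := by
    simp [Prod.ext_iff]
  rcases split_or_avoid hconn h01 with hav | ⟨h1, h2⟩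
  swap
  · exact Or.inr ⟨h1, h2⟩
  left
  -- first step: gives 0 < j and H 0 (j-1)
  obtain ⟨hH0, hjpos⟩ : H 0 (j - 1) ∧ 0 < j := by
    rcases hav.cases_head with heq | ⟨v, hstep, -⟩
    · exfalso
      have : (0 : Fin 3) = 2 := congrArg Prod.snd heq
      simp at this
    · obtain ⟨⟨-, hv, hc⟩, -, hne2⟩ := hstep
      rcases hc with ⟨he1, hor⟩ | ⟨hs, hor⟩
      · exfalso
        rcases hor with ⟨-, (⟨-, hv2⟩ | ⟨h1, -⟩)⟩ | ⟨-, (⟨h1, -⟩ | ⟨h1, -⟩)⟩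
        · exact hne2 (Prod.ext he1.symm hv2)
        · simp at h1
        · simp at h1
        · simp at h1
      · rcases hor with ⟨h1, -⟩ | ⟨h1, hH⟩
        · omega
        · have hv0 : v.2 = 0 := hs.symm
          constructor
          · have : v.1 = j - 1 := by omega
            rw [this] at hH
            have hv0' : v.2 = 0 := hs.symm
            exact hv0' ▸ hH
          · omega
  obtain ⟨k, rfl⟩ : ∃ k, j = k + 1 := ⟨j - 1, by omega⟩
  simp only [Nat.add_sub_cancel] at hH0 ⊢
  -- last step: gives H 2 k
  have hH2 : H 2 k := by
    rcases hav.cases_tail with heq | ⟨u, -, hstep⟩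
    · exfalso
      have : (2 : Fin 3) = 0 := congrArg Prod.snd heq
      simp at this
    · obtain ⟨⟨hu, -, hc⟩, hne1, -⟩ := hstep
      rcases hc with ⟨he1, hor⟩ | ⟨hs, hor⟩
      · exfalso
        rcases hor with ⟨-, (⟨-, h1⟩ | ⟨-, h1⟩)⟩ | ⟨-, (⟨hu2, -⟩ | ⟨-, h1⟩)⟩
        · simp at h1
        · simp at h1
        · exact hne1 (Prod.ext he1 hu2)
        · simp at h1
      · rcases hor with ⟨h1, hH⟩ | ⟨h1, -⟩
        · have : u.1 = k := by omega
          rw [this] at hH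
          have hu2 : u.2 = 2 := hs
          exact hu2 ▸ hH
        · omega
  refine ⟨Nat.succ_pos k, ?_, hH0, hH2⟩
  -- project the avoiding path down to columns 0..k
  have hproj := Relation.ReflTransGen.lift'
    (f := fun p : ℕ × Fin 3 => ((min p.1 k, p.2) : ℕ × Fin 3))
    (r := fun u v => TwoBlockStep pab pbc H (k + 1) u v ∧
      u ≠ ((k + 1, 1) : ℕ × Fin 3) ∧ v ≠ (k + 1, 1))
    (p := TwoBlockStep pab pbc H k)
    (fun u v h => by
      obtain ⟨⟨hu, hv, hc⟩, hnu, hnv⟩ := h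
      rcases hc with ⟨he1, hor⟩ | ⟨hs, hor⟩
      · by_cases huk : u.1 ≤ k
        · have h1 : min u.1 k = u.1 := min_eq_left huk
          have h2 : min v.1 k = v.1 := min_eq_left (he1 ▸ huk)
          exact Relation.ReflTransGen.single
            ⟨by simpa [h1] using huk, by simpa [h2] using (he1 ▸ huk),
             Or.inl ⟨by simpa [h1, h2] using he1, by simpa [h1] using hor⟩⟩
        · exfalso
          have hu1 : u.1 = k + 1 := by omega
          rcases hor with ⟨-, (⟨hu2, hv2⟩ | ⟨hu2, hv2⟩)⟩ | ⟨-, (⟨hu2, hv2⟩ | ⟨hu2, hv2⟩)⟩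
          · exact hnv (Prod.ext (by omega) hv2)
          · exact hnu (Prod.ext hu1 hu2)
          · exact hnu (Prod.ext hu1 hu2)
          · exact hnv (Prod.ext (by omega) hv2)
      · rcases hor with ⟨h1, hH⟩ | ⟨h1, hH⟩
        · by_cases hvk : v.1 ≤ k
          · have e1 : min u.1 k = u.1 := min_eq_left (by omega)
            have e2 : min v.1 k = v.1 := min_eq_left hvk
            exact Relation.ReflTransGen.single
              ⟨by simp [e1]; omega, by simpa [e2] using hvk,
               Or.inr ⟨by simpa [e1, e2] using hs, Or.inl ⟨by simp [e1, e2]; omega,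
                 by simpa [e1] using hH⟩⟩⟩
          · have : (min u.1 k, u.2) = ((min v.1 k, v.2) : ℕ × Fin 3) :=
              Prod.ext (by simp; omega) hs
            show Relation.ReflTransGen (TwoBlockStep pab pbc H k) (min u.1 k, u.2) (min v.1 k, v.2)
            rw [this]
        · by_cases huk : u.1 ≤ k
          · have e1 : min u.1 k = u.1 := min_eq_left huk
            have e2 : min v.1 k = v.1 := min_eq_left (by omega)
            exact Relation.ReflTransGen.single
              ⟨by simpa [e1] using huk, by simp [e2]; omega,
               Or.inr ⟨by simpa [e1, e2] using hs, Or.inr ⟨by simp [e1, e2]; omega,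
                 by simpa [e2] using hH⟩⟩⟩
          · have : (min u.1 k, u.2) = ((min v.1 k, v.2) : ℕ × Fin 3) :=
              Prod.ext (by simp; omega) hs
            show Relation.ReflTransGen (TwoBlockStep pab pbc H k) (min u.1 k, u.2) (min v.1 k, v.2)
            rw [this]) _ _ hav
  simpa [Function.onFun] using hproj
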